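/- arXiv:1510.02959 — 2 statements merged into one kernel-verified Lean document; each statement's English description precedes it below -/
import Mathlib

section
/- There exists a sequence of signs ε_k ∈ {−1, +1} such that for every m ≥ 0, the sup norm over x ∈ ℝ of |∑_{k=0}^{m} ε_k e^{ikx}| is at most 5√(m+1). -/
open Complex Finset

noncomputable def AB : ℕ → (ℕ → ℝ) × (ℕ → ℝ)
  | 0 => (fun _ => 1, fun _ => 1)
  | n+1 => (fun k => if k < 2^n then (AB n).1 k else (AB n).2 (k - 2^n),
            fun k => if k < 2^n then (AB n).1 k else -(AB n).2 (k - 2^n))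

lemma AB_sign (n k : ℕ) : ((AB n).1 k = 1 ∨ (AB n).1 k = -1) ∧ ((AB n).2 k = 1 ∨ (AB n).2 k = -1) := by
  induction n generalizing k with
  | zero => simp [AB]
  | succ n ih =>
    constructor
    · simp only [AB]
      split
      · exact (ih k).1
      · exact (ih _).2
    · simp only [AB]
      split
      · exact (ih k).1
      · rcases (ih (k - 2^n)).2 with h | h <;> simp [h]

noncomputable def rsEps (k : ℕ) : ℝ := (AB (k+1)).1 k

lemma AB_fst_stable : ∀ m n k, k < 2^n → n ≤ m → (AB m).1 k = (AB n).1 k := by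
  intro m
  induction m with
  | zero => intro n k _ hn; interval_cases n; rfl
  | succ m ih =>
    intro n k hk hn
    rcases Nat.eq_or_lt_of_le hn with h | h
    · rw [h]
    · have hnm : n ≤ m := Nat.lt_succ_iff.mp h
      have hk2 : k < 2^m := hk.trans_le (Nat.pow_le_pow_right (by norm_num) hnm)
      show (AB (m+1)).1 k = _
      simp only [AB, if_pos hk2]
      exact ih n k hk hnm

lemma rsEps_eq (n k : ℕ) (hk : k < 2^n) : rsEps k = (AB n).1 k := by
  have h1 : k < 2^(k+1) := (Nat.lt_two_pow_self (n := k)).trans (Nat.pow_lt_pow_succ (by norm_num))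
  rw [rsEps, ← AB_fst_stable (max n (k+1)) (k+1) k h1 (le_max_right _ _),
    AB_fst_stable (max n (k+1)) n k hk (le_max_left _ _)]

noncomputable def ee (k : ℕ) (x : ℝ) : ℂ := Complex.exp (Complex.I * k * x)

lemma ee_add (a b : ℕ) (x : ℝ) : ee (a + b) x = ee a x * ee b x := by
  rw [ee, ee, ee, ← Complex.exp_add]
  congr 1
  push_cast
  ring

lemma norm_ee (k : ℕ) (x : ℝ) : ‖ee k x‖ = 1 := by
  rw [ee, show Complex.I * (k:ℂ) * (x:ℝ) = ((k * x : ℝ) : ℂ) * Complex.I by push_cast; ring]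
  exact Complex.norm_exp_ofReal_mul_I _

noncomputable def P (n : ℕ) (x : ℝ) : ℂ := ∑ k ∈ range (2^n), ((AB n).1 k : ℂ) * ee k x
noncomputable def Qf (n : ℕ) (x : ℝ) : ℂ := ∑ k ∈ range (2^n), ((AB n).2 k : ℂ) * ee k x

lemma P_succ (n : ℕ) (x : ℝ) : P (n+1) x = P n x + ee (2^n) x * Qf n x := by
  rw [P, show 2^(n+1) = 2^n + 2^n by ring, Finset.sum_range_add]
  congr 1
  · refine Finset.sum_congr rfl fun k hk => ?_
    rw [Finset.mem_range] at hk
    show (((AB (n+1)).1 k : ℝ) : ℂ) * ee k x = _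
    simp only [AB, if_pos hk]
  · rw [Qf, Finset.mul_sum]
    refine Finset.sum_congr rfl fun k hk => ?_
    rw [Finset.mem_range] at hk
    show (((AB (n+1)).1 (2^n + k) : ℝ) : ℂ) * ee (2^n + k) x = _
    simp only [AB, if_neg (by omega : ¬ 2^n + k < 2^n)]
    rw [ee_add, show 2^n + k - 2^n = k by omega]
    ring

lemma Qf_succ (n : ℕ) (x : ℝ) : Qf (n+1) x = P n x - ee (2^n) x * Qf n x := by
  rw [Qf, show 2^(n+1) = 2^n + 2^n by ring, Finset.sum_range_add, sub_eq_add_neg]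
  congr 1
  · refine Finset.sum_congr rfl fun k hk => ?_
    rw [Finset.mem_range] at hk
    show (((AB (n+1)).2 k : ℝ) : ℂ) * ee k x = _
    simp only [AB, if_pos hk]
  · rw [Qf, Finset.mul_sum, ← Finset.sum_neg_distrib]
    refine Finset.sum_congr rfl fun k hk => ?_
    rw [Finset.mem_range] at hk
    show (((AB (n+1)).2 (2^n + k) : ℝ) : ℂ) * ee (2^n + k) x = _
    simp only [AB, if_neg (by omega : ¬ 2^n + k < 2^n)]
    rw [ee_add, show 2^n + k - 2^n = k by omega]
    push_cast
    ring

lemma parseval (n : ℕ) (x : ℝ) :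
    ‖P n x‖ * ‖P n x‖ + ‖Qf n x‖ * ‖Qf n x‖ = 2^(n+1) := by
  induction n with
  | zero =>
    have : P 0 x = 1 ∧ Qf 0 x = 1 := by
      constructor <;> simp [P, Qf, AB, ee]
    rw [this.1, this.2]; norm_num
  | succ n ih =>
    rw [P_succ, Qf_succ]
    have hv : ‖ee (2^n) x * Qf n x‖ = ‖Qf n x‖ := by
      rw [norm_mul, norm_ee, one_mul]
    calc ‖P n x + ee (2^n) x * Qf n x‖ * ‖P n x + ee (2^n) x * Qf n x‖
          + ‖P n x - ee (2^n) x * Qf n x‖ * ‖P n x - ee (2^n) x * Qf n x‖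
        = 2 * (‖P n x‖ * ‖P n x‖ + ‖ee (2^n) x * Qf n x‖ * ‖ee (2^n) x * Qf n x‖) :=
          by have := parallelogram_law_with_norm ℝ (P n x) (ee (2^n) x * Qf n x); simp only [sq] at this; exact this
      _ = 2^(n+1+1) := by rw [hv, ih]; ring

lemma norm_P_le (n : ℕ) (x : ℝ) : ‖P n x‖ ≤ Real.sqrt (2 * 2^n) := by
  have h := parseval n x
  have he : (2:ℝ)^(n+1) = 2 * 2^n := by ring
  have h2 : ‖P n x‖ * ‖P n x‖ ≤ 2 * 2^n := by
    nlinarith [mul_self_nonneg ‖Qf n x‖]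
  calc ‖P n x‖ = Real.sqrt (‖P n x‖ * ‖P n x‖) := (Real.sqrt_mul_self (norm_nonneg _)).symm
    _ ≤ Real.sqrt (2 * 2^n) := Real.sqrt_le_sqrt h2

lemma norm_Qf_le (n : ℕ) (x : ℝ) : ‖Qf n x‖ ≤ Real.sqrt (2 * 2^n) := by
  have h := parseval n x
  have he : (2:ℝ)^(n+1) = 2 * 2^n := by ring
  have h2 : ‖Qf n x‖ * ‖Qf n x‖ ≤ 2 * 2^n := by
    nlinarith [mul_self_nonneg ‖P n x‖]
  calc ‖Qf n x‖ = Real.sqrt (‖Qf n x‖ * ‖Qf n x‖) := (Real.sqrt_mul_self (norm_nonneg _)).symm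
    _ ≤ Real.sqrt (2 * 2^n) := Real.sqrt_le_sqrt h2

noncomputable def Sp (N : ℕ) (x : ℝ) : ℂ := ∑ k ∈ range N, (rsEps k : ℂ) * ee k x
noncomputable def Sq (n N : ℕ) (x : ℝ) : ℂ := ∑ k ∈ range N, ((AB n).2 k : ℂ) * ee k x

lemma Sp_split (n r : ℕ) (hr : r ≤ 2^n) (x : ℝ) :
    Sp (2^n + r) x = P n x + ee (2^n) x * Sq n r x := by
  rw [Sp, Finset.sum_range_add]
  congr 1
  · refine Finset.sum_congr rfl fun k hk => ?_
    rw [Finset.mem_range] at hk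
    rw [rsEps_eq n k hk]
  · rw [Sq, Finset.mul_sum]
    refine Finset.sum_congr rfl fun k hk => ?_
    rw [Finset.mem_range] at hk
    have hk2 : 2^n + k < 2^(n+1) := by
      have : 2^(n+1) = 2^n + 2^n := by ring
      omega
    rw [rsEps_eq (n+1) _ hk2]
    show (((AB (n+1)).1 (2^n + k) : ℝ) : ℂ) * ee (2^n + k) x = _
    simp only [AB, if_neg (by omega : ¬ 2^n + k < 2^n)]
    rw [ee_add, show 2^n + k - 2^n = k by omega]
    ring

lemma Sq_low (n N : ℕ) (hN : N ≤ 2^n) (x : ℝ) : Sq (n+1) N x = Sp N x := by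
  rw [Sq, Sp]
  refine Finset.sum_congr rfl fun k hk => ?_
  rw [Finset.mem_range] at hk
  have hk2 : k < 2^n := lt_of_lt_of_le hk hN
  rw [rsEps_eq n k hk2]
  show (((AB (n+1)).2 k : ℝ) : ℂ) * ee k x = _
  simp only [AB, if_pos hk2]

lemma Sq_split (n r : ℕ) (hr : r ≤ 2^n) (x : ℝ) :
    Sq (n+1) (2^n + r) x = P n x - ee (2^n) x * Sq n r x := by
  rw [Sq, Finset.sum_range_add, sub_eq_add_neg]
  congr 1
  · refine Finset.sum_congr rfl fun k hk => ?_
    rw [Finset.mem_range] at hk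
    show (((AB (n+1)).2 k : ℝ) : ℂ) * ee k x = _
    simp only [AB, if_pos hk]
  · rw [Sq, Finset.mul_sum, ← Finset.sum_neg_distrib]
    refine Finset.sum_congr rfl fun k hk => ?_
    rw [Finset.mem_range] at hk
    show (((AB (n+1)).2 (2^n + k) : ℝ) : ℂ) * ee (2^n + k) x = _
    simp only [AB, if_neg (by omega : ¬ 2^n + k < 2^n)]
    rw [ee_add, show 2^n + k - 2^n = k by omega]
    push_cast
    ring

lemma key (s r : ℝ) (hr : 0 ≤ r) (hrs : r ≤ s) :
    Real.sqrt (2*s) + 5 * Real.sqrt r ≤ 5 * Real.sqrt (s + r) := by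
  have hs : 0 ≤ s := hr.trans hrs
  have ha2 : Real.sqrt (s+r) ^ 2 = s + r := Real.sq_sqrt (by linarith)
  have hb2 : Real.sqrt r ^ 2 = r := Real.sq_sqrt hr
  have hc2 : Real.sqrt s ^ 2 = s := Real.sq_sqrt hs
  have hd2 : Real.sqrt 2 ^ 2 = 2 := Real.sq_sqrt (by norm_num)
  have hd : Real.sqrt 2 ≤ 1.5 := by
    nlinarith [Real.sqrt_nonneg 2]
  have h2s : Real.sqrt (2*s) = Real.sqrt 2 * Real.sqrt s := Real.sqrt_mul (by norm_num) s
  have hbc : Real.sqrt r ≤ Real.sqrt s := Real.sqrt_le_sqrt hrs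
  have hac : Real.sqrt (s+r) ≤ Real.sqrt 2 * Real.sqrt s := by
    rw [← h2s]; exact Real.sqrt_le_sqrt (by linarith)
  have ha := Real.sqrt_nonneg (s+r)
  have hb := Real.sqrt_nonneg r
  have hc := Real.sqrt_nonneg s
  have hd0 := Real.sqrt_nonneg 2
  rw [h2s]
  nlinarith [sq_nonneg (Real.sqrt (s+r) - Real.sqrt r), mul_nonneg hb hc,
    mul_nonneg ha hc, mul_nonneg ha hb,
    mul_le_mul_of_nonneg_left hac (by linarith : (0:ℝ) ≤ Real.sqrt 2 * Real.sqrt s)]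

lemma main_bound : ∀ N : ℕ, ∀ x : ℝ,
    ‖Sp N x‖ ≤ 5 * Real.sqrt N ∧ ∀ m, N ≤ 2^m → ‖Sq m N x‖ ≤ 5 * Real.sqrt N := by
  intro N
  induction N using Nat.strong_induction_on with
  | _ N ih =>
    intro x
    rcases Nat.eq_zero_or_pos N with rfl | hN
    · constructor
      · simp [Sp]
      · intro m _; simp [Sq]
    set n := Nat.log 2 N with hn
    have hl : 2^n ≤ N := Nat.pow_log_le_self 2 hN.ne'
    have hu : N < 2^(n+1) := Nat.lt_pow_succ_log_self (by norm_num) N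
    have hpow : 2^(n+1) = 2^n + 2^n := by ring
    set r := N - 2^n with hrdef
    have hNr : N = 2^n + r := by omega
    have hr : r < 2^n := by omega
    have hrN : r < N := by
      have : 0 < 2^n := by positivity
      omega
    have hcast : ((N : ℝ)) = (2^n : ℕ) + (r : ℕ) := by rw [hNr]; push_cast; ring
    have hSp : ‖Sp N x‖ ≤ 5 * Real.sqrt N := by
      rw [hNr, Sp_split n r hr.le x]
      calc ‖P n x + ee (2^n) x * Sq n r x‖
          ≤ ‖P n x‖ + ‖ee (2^n) x * Sq n r x‖ := norm_add_le _ _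
        _ = ‖P n x‖ + ‖Sq n r x‖ := by rw [norm_mul, norm_ee, one_mul]
        _ ≤ Real.sqrt (2 * 2^n) + 5 * Real.sqrt r :=
            add_le_add (norm_P_le n x) ((ih r hrN x).2 n hr.le)
        _ ≤ 5 * Real.sqrt ((2^n : ℕ) + (r : ℕ)) := by
            have := key ((2^n : ℕ) : ℝ) r (Nat.cast_nonneg r)
              (by exact_mod_cast hr.le)
            push_cast at this ⊢
            convert this using 3 <;> push_cast <;> ring
        _ = 5 * Real.sqrt ((2^n + r : ℕ)) := by push_cast; ring_nf
    refine ⟨hSp, ?_⟩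
    intro m hm
    match m with
    | 0 =>
      have hN1 : N = 1 := by omega
      subst hN1
      have : Sq 0 1 x = 1 := by simp [Sq, AB, ee]
      rw [this]
      simp
    | (m+1) =>
      by_cases hN2 : N ≤ 2^m
      · rw [Sq_low m N hN2 x]; exact hSp
      · push_neg at hN2
        have hm2 : 2^(m+1) = 2^m + 2^m := by ring
        set r' := N - 2^m with hr'def
        have hNr' : N = 2^m + r' := by omega
        have hr' : r' ≤ 2^m := by omega
        have hr'N : r' < N := by
          have : 0 < 2^m := by positivity
          omega
        rw [hNr', Sq_split m r' hr' x]
        calc ‖P m x - ee (2^m) x * Sq m r' x‖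
            ≤ ‖P m x‖ + ‖ee (2^m) x * Sq m r' x‖ := norm_sub_le _ _
          _ = ‖P m x‖ + ‖Sq m r' x‖ := by rw [norm_mul, norm_ee, one_mul]
          _ ≤ Real.sqrt (2 * 2^m) + 5 * Real.sqrt r' :=
              add_le_add (norm_P_le m x) ((ih r' hr'N x).2 m hr')
          _ ≤ 5 * Real.sqrt ((2^m + r' : ℕ)) := by
              have := key ((2^m : ℕ) : ℝ) r' (Nat.cast_nonneg r')
                (by exact_mod_cast hr')
              push_cast at this ⊢
              convert this using 3 <;> push_cast <;> ring

/-- Rudin–Shapiro: there is a sequence of signs `ε k = ±1` such that for every `m`,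
the sup norm of `∑_{k=0}^m ε_k e^{ikx}` is at most `5 √(m+1)`. -/
theorem rudin_shapiro :
    ∃ ε : ℕ → ℝ, (∀ k, ε k = 1 ∨ ε k = -1) ∧
      ∀ m : ℕ, ∀ x : ℝ,
        ‖∑ k ∈ Finset.range (m + 1), (ε k : ℂ) * Complex.exp (Complex.I * k * x)‖
          ≤ 5 * Real.sqrt (m + 1) := by
  refine ⟨rsEps, fun k => (AB_sign (k+1) k).1, fun m x => ?_⟩
  have h := (main_bound (m+1) x).1
  have he : Sp (m+1) x = ∑ k ∈ Finset.range (m + 1), (rsEps k : ℂ) * Complex.exp (Complex.I * k * x) := rfl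
  rw [he] at h
  calc _ ≤ 5 * Real.sqrt ((m+1 : ℕ)) := h
    _ = 5 * Real.sqrt ((m : ℝ) + 1) := by push_cast; ring_nf
end

section
/- Let r > 0, β ∈ ℝ, 1 ≤ s < ∞. Then the best approximation by trigonometric polynomials of degree < n of the Weyl–Nagy class W^r_{β,∞} in the L_s metric satisfies E_n(W^r_{β,∞})_s ≥ (1/2) n^{−r}. -/
open MeasureTheory Real Complex Finset
open scoped ENNReal

/-- The `k`-th Fourier coefficient of a `2π`-periodic function. -/
noncomputable def fourierCoef (f : ℝ → ℂ) (k : ℤ) : ℂ :=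
  (1 / (2 * π)) * ∫ t in (-π)..π, f t * Complex.exp (-Complex.I * k * t)

/-- Membership in the Weyl–Nagy class `W^r_{β,∞}`. -/
def WeylNagyClass (r β : ℝ) (f : ℝ → ℝ) : Prop :=
  (∀ t, f (t + 2 * π) = f t) ∧ IntervalIntegrable f volume (-π) π ∧
  ∃ g : ℝ → ℝ, (∀ t, g (t + 2 * π) = g t) ∧ IntervalIntegrable g volume (-π) π ∧
    (∀ᵐ t : ℝ, |g t| ≤ 1) ∧
    fourierCoef (fun t => (g t : ℂ)) 0 = 0 ∧
    ∀ k : ℤ, k ≠ 0 →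
      fourierCoef (fun t => (g t : ℂ)) k
        = ((k.natAbs : ℝ) ^ r : ℝ) * fourierCoef (fun t => (f t : ℂ)) k *
            Complex.exp (Complex.I * (β * π / 2) * (k.sign : ℤ))

/-- Real trigonometric polynomials of degree at most `n - 1`. -/
def IsRealTrigPoly (n : ℕ) (T : ℝ → ℝ) : Prop :=
  ∃ c : ℤ → ℂ, (∀ k : ℤ, c (-k) = (starRingEnd ℂ) (c k)) ∧
    ∀ t : ℝ, (T t : ℂ) =
      ∑ k ∈ Finset.Icc (1 - (n : ℤ)) ((n : ℤ) - 1), c k * Complex.exp (Complex.I * k * t)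

/-- Best approximation of the class `W^r_{β,∞}` by trigonometric polynomials of
degree `< n` in the `L_s` metric. -/
noncomputable def EnWeylNagy (r β : ℝ) (n : ℕ) (s : ℝ≥0∞) : ℝ≥0∞ :=
  ⨆ f : {f : ℝ → ℝ // WeylNagyClass r β f},
    ⨅ T : {T : ℝ → ℝ // IsRealTrigPoly n T},
      eLpNorm (fun t : ℝ => f.1 t - T.1 t) s (volume.restrict (Set.Ioc (0 : ℝ) (2 * π)))

/- ### Auxiliary lemmas -/

lemma integral_exp_I_mul (m : ℤ) :
    ∫ t in (-π)..π, Complex.exp (Complex.I * m * t) = if m = 0 then (2*π:ℂ) else 0 := by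
  rcases eq_or_ne m 0 with hm | hm
  · simp [hm, two_mul]
  · have hc : (Complex.I * m : ℂ) ≠ 0 := by
      simp [Complex.I_ne_zero, hm]
    rw [if_neg hm]
    rw [integral_exp_mul_complex hc]
    have : Complex.exp (Complex.I * m * π) = Complex.exp (Complex.I * m * (-π:ℝ)) := by
      rw [show (Complex.I * m * π : ℂ) = Complex.I * m * (-π:ℝ) + m * (2 * π * Complex.I) by
        push_cast; ring]
      rw [Complex.exp_add, Complex.exp_int_mul_two_pi_mul_I, mul_one]
    rw [this, sub_self, zero_div]

lemma contE (m k : ℤ) : Continuous (fun t : ℝ =>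
    Complex.exp (Complex.I * m * t) * Complex.exp (-Complex.I * k * t)) := by
  fun_prop

lemma integral_cexp_mul_cexp (m k : ℤ) :
    ∫ t in (-π)..π, Complex.exp (Complex.I * m * t) * Complex.exp (-Complex.I * k * t)
      = if k = m then (2*π:ℂ) else 0 := by
  have : ∀ t : ℝ, Complex.exp (Complex.I * m * t) * Complex.exp (-Complex.I * k * t)
      = Complex.exp (Complex.I * ((m - k : ℤ) : ℂ) * t) := by
    intro t; rw [← Complex.exp_add]; push_cast; ring_nf
  simp_rw [this]
  rw [show (Complex.I * ((m - k : ℤ) : ℂ)) = Complex.I * ((m - k : ℤ) : ℂ) from rfl]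
  rw [integral_exp_I_mul (m - k)]
  rcases eq_or_ne k m with h | h
  · rw [if_pos h, if_pos (by omega)]
  · rw [if_neg h, if_neg (by omega)]

lemma myCosEq (z : ℂ) : Complex.cos z
    = (Complex.exp (Complex.I * z) + Complex.exp (-(Complex.I * z))) / 2 := by
  rw [Complex.cos]; ring_nf

lemma fourierCoef_cos (m k : ℤ) (c : ℝ) :
    fourierCoef (fun t => ((Real.cos (m * t + c) : ℝ) : ℂ)) k
      = (if k = m then Complex.exp (Complex.I * c) / 2 else 0)
        + (if k = -m then Complex.exp (-(Complex.I * c)) / 2 else 0) := by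
  have key : ∀ t : ℝ, ((Real.cos (m * t + c) : ℝ) : ℂ) * Complex.exp (-Complex.I * k * t)
      = Complex.exp (Complex.I * c) / 2
          * (Complex.exp (Complex.I * m * t) * Complex.exp (-Complex.I * k * t))
        + Complex.exp (-(Complex.I * c)) / 2
          * (Complex.exp (Complex.I * (-m : ℤ) * t) * Complex.exp (-Complex.I * k * t)) := by
    intro t
    rw [Complex.ofReal_cos, myCosEq]
    simp only [← Complex.exp_add, div_mul_eq_mul_div, mul_div_assoc, add_mul, add_div]
    push_cast
    ring_nf
  unfold fourierCoef
  simp_rw [key]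
  rw [intervalIntegral.integral_add
      ((continuous_const.fun_mul (contE m k)).intervalIntegrable _ _)
      ((continuous_const.fun_mul (contE (-m) k)).intervalIntegrable _ _),
    intervalIntegral.integral_const_mul, intervalIntegral.integral_const_mul,
    integral_cexp_mul_cexp, integral_cexp_mul_cexp]
  have hπ : (π:ℂ) ≠ 0 := by exact_mod_cast Real.pi_ne_zero
  rcases eq_or_ne k m with h1 | h1 <;> rcases eq_or_ne k (-m) with h2 | h2 <;>
    simp [h1, h2] <;> split_ifs <;> field_simp <;> ring

lemma fourierCoef_const_mul (a : ℂ) (f : ℝ → ℂ) (k : ℤ) :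
    fourierCoef (fun t => a * f t) k = a * fourierCoef f k := by
  unfold fourierCoef
  simp_rw [mul_assoc]
  rw [intervalIntegral.integral_const_mul]
  ring

lemma fourierCoef_sub (f g : ℝ → ℂ) (k : ℤ) (hf : Continuous f) (hg : Continuous g) :
    fourierCoef (fun t => f t - g t) k = fourierCoef f k - fourierCoef g k := by
  unfold fourierCoef
  simp_rw [sub_mul]
  rw [intervalIntegral.integral_sub
      ((hf.fun_mul (by fun_prop)).intervalIntegrable _ _)
      ((hg.fun_mul (by fun_prop)).intervalIntegrable _ _)]
  ring

lemma fourierCoef_trigPoly (n : ℕ) (c : ℤ → ℂ) :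
    fourierCoef (fun t => ∑ j ∈ Finset.Icc (1 - (n : ℤ)) ((n : ℤ) - 1),
      c j * Complex.exp (Complex.I * j * t)) (n : ℤ) = 0 := by
  unfold fourierCoef
  have key : ∀ t : ℝ, (∑ j ∈ Finset.Icc (1 - (n : ℤ)) ((n : ℤ) - 1),
        c j * Complex.exp (Complex.I * j * t)) * Complex.exp (-Complex.I * (n : ℤ) * t)
      = ∑ j ∈ Finset.Icc (1 - (n : ℤ)) ((n : ℤ) - 1),
        c j * (Complex.exp (Complex.I * j * t) * Complex.exp (-Complex.I * (n : ℤ) * t)) := by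
    intro t; rw [Finset.sum_mul]; simp [mul_assoc]
  simp_rw [key]
  rw [intervalIntegral.integral_finset_sum (fun j _ =>
    (continuous_const.fun_mul (contE j n)).intervalIntegrable _ _)]
  rw [Finset.sum_eq_zero, mul_zero]
  intro j hj
  rw [intervalIntegral.integral_const_mul, integral_cexp_mul_cexp, if_neg, mul_zero]
  simp only [Finset.mem_Icc] at hj
  omega

lemma norm_fourierCoef_le (h : ℝ → ℂ) (k : ℤ) :
    ‖fourierCoef h k‖ ≤ (1 / (2 * π)) * ∫ t in (-π)..π, ‖h t‖ := by
  unfold fourierCoef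
  rw [norm_mul]
  have h1 : ‖(1 / (2 * (π:ℂ)))‖ = 1 / (2 * π) := by
    rw [show (1 / (2 * (π:ℂ))) = ((1 / (2 * π) : ℝ) : ℂ) by push_cast; ring]
    rw [Complex.norm_real, Real.norm_eq_abs, abs_of_pos (by positivity)]
  rw [h1]
  gcongr
  calc ‖∫ t in (-π)..π, h t * Complex.exp (-Complex.I * k * t)‖
      ≤ ∫ t in (-π)..π, ‖h t * Complex.exp (-Complex.I * k * t)‖ :=
        intervalIntegral.norm_integral_le_integral_norm (by linarith [Real.pi_pos])
    _ = ∫ t in (-π)..π, ‖h t‖ := by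
        congr 1; funext t
        rw [norm_mul]
        have : ‖Complex.exp (-Complex.I * k * t)‖ = 1 := by
          rw [Complex.norm_exp]
          simp
        rw [this, mul_one]

/- ### The test function and its membership -/

lemma f1_mem (r β : ℝ) (hr : 0 < r) (n : ℕ) (hn : 1 ≤ n) :
    WeylNagyClass r β (fun t => ((n:ℝ)^(-r) : ℝ) * Real.cos (((n:ℤ):ℝ) * t + 0)) := by
  have hnpos : (0:ℝ) < n := by exact_mod_cast hn
  have hper : ∀ (c t : ℝ), Real.cos (((n:ℤ):ℝ) * (t + 2*π) + c) = Real.cos (((n:ℤ):ℝ) * t + c) := by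
    intro c t
    rw [show ((n:ℤ):ℝ) * (t + 2*π) + c = (((n:ℤ):ℝ) * t + c) + ((n:ℤ):ℝ) * (2*π) by ring]
    exact Real.cos_add_int_mul_two_pi _ _
  have hcoef_f : ∀ k : ℤ, fourierCoef (fun t =>
      ((((n:ℝ)^(-r) : ℝ) * Real.cos (((n:ℤ):ℝ) * t + 0) : ℝ) : ℂ)) k
      = (((n:ℝ)^(-r) : ℝ) : ℂ) * ((if k = (n:ℤ) then Complex.exp (Complex.I * ((0:ℝ):ℂ)) / 2 else 0)
        + (if k = -(n:ℤ) then Complex.exp (-(Complex.I * ((0:ℝ):ℂ))) / 2 else 0)) := by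
    intro k
    rw [show (fun t => ((((n:ℝ)^(-r) : ℝ) * Real.cos (((n:ℤ):ℝ) * t + 0) : ℝ) : ℂ))
        = fun t => (((n:ℝ)^(-r) : ℝ) : ℂ) * ((Real.cos (((n:ℤ):ℝ) * t + 0) : ℝ) : ℂ) by
      funext t; exact Complex.ofReal_mul _ _]
    rw [fourierCoef_const_mul, fourierCoef_cos]
  have hpow : ((((n:ℝ)^r : ℝ)) : ℂ) * ((((n:ℝ)^(-r) : ℝ)) : ℂ) = 1 := by
    rw [← Complex.ofReal_mul, ← Real.rpow_add hnpos]
    norm_num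
  refine ⟨fun t => by dsimp only; rw [hper],
    (by fun_prop : Continuous _).intervalIntegrable _ _,
    fun t => Real.cos (((n:ℤ):ℝ) * t + β * π / 2), fun t => hper _ t,
    (by fun_prop : Continuous _).intervalIntegrable _ _,
    Filter.Eventually.of_forall fun t => Real.abs_cos_le_one _, ?_, ?_⟩
  · rw [fourierCoef_cos]
    rw [if_neg (by omega : ¬ (0:ℤ) = (n:ℤ)), if_neg (by omega : ¬ (0:ℤ) = -(n:ℤ)), add_zero]
  · intro k hk
    rw [fourierCoef_cos, hcoef_f]
    rcases eq_or_ne k (n:ℤ) with h1 | h1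
    · subst h1
      rw [if_pos rfl, if_neg (by omega), if_pos rfl, if_neg (by omega)]
      rw [show (((n:ℤ).natAbs : ℝ)) = (n:ℝ) by rw [Int.natAbs_natCast],
        show ((n:ℤ).sign) = 1 from Int.sign_eq_one_iff_pos.mpr (by omega)]
      simp only [Complex.ofReal_zero, mul_zero, Complex.exp_zero, add_zero, neg_zero,
        Int.cast_one, mul_one]
      push_cast
      linear_combination (-(Complex.exp (Complex.I * ((β:ℂ) * (π:ℂ) / 2)))/2) * hpow
    · rcases eq_or_ne k (-(n:ℤ)) with h2 | h2
      · subst h2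
        rw [if_neg h1, if_pos rfl, if_neg (by omega), if_pos rfl]
        rw [show (((-(n:ℤ)).natAbs : ℝ)) = (n:ℝ) by rw [Int.natAbs_neg, Int.natAbs_natCast],
          show ((-(n:ℤ)).sign) = -1 from Int.sign_eq_neg_one_iff_neg.mpr (by omega)]
        simp only [Complex.ofReal_zero, mul_zero, Complex.exp_zero, add_zero, neg_zero,
          zero_add, Int.cast_neg, Int.cast_one, mul_neg, mul_one]
        push_cast
        rw [show -(Complex.I * ((β:ℂ) * (π:ℂ) / 2)) = Complex.I * ((β:ℂ) * (π:ℂ) / 2) * (-1) by ring]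
        linear_combination (-(Complex.exp (Complex.I * ((β:ℂ) * (π:ℂ) / 2) * (-1)))/2) * hpow
      · rw [if_neg h1, if_neg h2, if_neg h1, if_neg h2]
        simp

lemma fourierCoef_f1 (r : ℝ) (n : ℕ) (hn : 1 ≤ n) :
    fourierCoef (fun t => ((((n:ℝ)^(-r) : ℝ) * Real.cos (((n:ℤ):ℝ) * t + 0) : ℝ) : ℂ)) (n:ℤ)
      = (((n:ℝ)^(-r) : ℝ) : ℂ) / 2 := by
  rw [show (fun t => ((((n:ℝ)^(-r) : ℝ) * Real.cos (((n:ℤ):ℝ) * t + 0) : ℝ) : ℂ))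
      = fun t => (((n:ℝ)^(-r) : ℝ) : ℂ) * ((Real.cos (((n:ℤ):ℝ) * t + 0) : ℝ) : ℂ) by
    funext t; exact Complex.ofReal_mul _ _]
  rw [fourierCoef_const_mul, fourierCoef_cos, if_pos rfl, if_neg (by omega : ¬ (n:ℤ) = -(n:ℤ))]
  simp
  ring

/-- Lower estimate for the best approximation of the Weyl–Nagy class:
`E_n(W^r_{β,∞})_s ≥ (1/2) n^{-r}` for `1 ≤ s < ∞`. -/
theorem En_weylNagy_lower (r β : ℝ) (hr : 0 < r) (s : ℝ≥0∞) (hs1 : 1 ≤ s) (hs2 : s ≠ ⊤)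
    (n : ℕ) (hn : 1 ≤ n) :
    ENNReal.ofReal ((1 / 2) * (n : ℝ) ^ (-r)) ≤ EnWeylNagy r β n s := by
  have hπ := Real.pi_pos
  have hnpos : (0:ℝ) < n := by exact_mod_cast hn
  unfold EnWeylNagy
  refine le_iSup_of_le ⟨fun t => ((n:ℝ)^(-r) : ℝ) * Real.cos (((n:ℤ):ℝ) * t + 0),
    f1_mem r β hr n hn⟩ (le_iInf fun T => ?_)
  set f₁ : ℝ → ℝ := fun t => ((n:ℝ)^(-r) : ℝ) * Real.cos (((n:ℤ):ℝ) * t + 0) with hf₁def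
  obtain ⟨c, hconj, hrep⟩ := T.2
  set S : ℝ → ℂ := fun t => ∑ j ∈ Finset.Icc (1 - (n : ℤ)) ((n : ℤ) - 1),
    c j * Complex.exp (Complex.I * j * t) with hSdef
  have hScont : Continuous S := by
    apply continuous_finset_sum
    intro j _
    fun_prop
  have hTeq : T.1 = fun t => (S t).re := by
    funext t
    rw [show T.1 t = ((T.1 t : ℂ)).re from (Complex.ofReal_re _).symm, hrep t]
  have hTcont : Continuous T.1 := by rw [hTeq]; exact Complex.continuous_re.comp hScont
  have hTper : ∀ t, T.1 (t + 2*π) = T.1 t := by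
    intro t
    apply Complex.ofReal_injective
    rw [hrep, hrep]
    apply Finset.sum_congr rfl
    intro j _
    congr 1
    rw [show (Complex.I * j * ((t + 2*π : ℝ) : ℂ)) = Complex.I * j * (t:ℝ) + j * (2*π*Complex.I) by
      push_cast; ring]
    rw [Complex.exp_add, Complex.exp_int_mul_two_pi_mul_I, mul_one]
  have hf₁cont : Continuous f₁ := by rw [hf₁def]; fun_prop
  set h : ℝ → ℝ := fun t => f₁ t - T.1 t with hhdef
  have hcont : Continuous h := hf₁cont.sub hTcont
  have hhper : ∀ t, h (t + 2*π) = h t := by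
    intro t
    simp only [hhdef, hTper]
    congr 1
    rw [hf₁def]
    dsimp only
    rw [show ((n:ℤ):ℝ) * (t + 2*π) + 0 = (((n:ℤ):ℝ) * t + 0) + ((n:ℤ):ℝ) * (2*π) by ring]
    rw [Real.cos_add_int_mul_two_pi]
  have coefh : fourierCoef (fun t => ((h t : ℝ) : ℂ)) (n:ℤ) = (((n:ℝ)^(-r) : ℝ) : ℂ) / 2 := by
    rw [show (fun t => ((h t : ℝ) : ℂ)) = fun t => ((f₁ t : ℝ) : ℂ) - ((T.1 t : ℝ) : ℂ) by
      funext t; exact Complex.ofReal_sub _ _]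
    have hsub := fourierCoef_sub (fun t => ((f₁ t : ℝ) : ℂ)) (fun t => ((T.1 t : ℝ) : ℂ)) (n:ℤ)
      (by fun_prop) (by fun_prop)
    rw [hsub]
    have hTc : fourierCoef (fun t => ((T.1 t : ℝ) : ℂ)) (n:ℤ) = 0 := by
      rw [show (fun t => ((T.1 t : ℝ) : ℂ)) = S from funext hrep]
      exact fourierCoef_trigPoly n c
    rw [hTc, sub_zero, hf₁def]
    exact fourierCoef_f1 r n hn
  -- norm bound
  have hb1 : ((n:ℝ)^(-r))/2 ≤ (1/(2*π)) * ∫ t in (-π)..π, |h t| := by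
    have hb := norm_fourierCoef_le (fun t => ((h t : ℝ) : ℂ)) (n:ℤ)
    rw [coefh] at hb
    have e1 : ‖(((n:ℝ)^(-r) : ℝ) : ℂ) / 2‖ = ((n:ℝ)^(-r))/2 := by
      rw [norm_div, Complex.norm_real, Real.norm_eq_abs, abs_of_pos (by positivity)]
      norm_num
    rw [e1] at hb
    simpa only [Complex.norm_real, Real.norm_eq_abs] using hb
  have hshift : ∫ t in (-π)..π, |h t| = ∫ t in (0:ℝ)..(2*π), |h t| := by
    have hp : Function.Periodic (fun t => |h t|) (2*π) := fun t => by simp only [hhper]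
    have := hp.intervalIntegral_add_eq (-π) 0
    rw [show -π + 2*π = π by ring, show (0:ℝ) + 2*π = 2*π by ring] at this
    exact this
  have hA : π * ((n:ℝ)^(-r)) ≤ ∫ t in (0:ℝ)..(2*π), |h t| := by
    rw [hshift, one_div_mul_eq_div] at hb1
    rw [div_le_div_iff₀ (by norm_num) (by positivity)] at hb1
    linarith
  -- ENNReal part
  set μ := volume.restrict (Set.Ioc (0:ℝ) (2*π)) with hμdef
  have hmeas : AEStronglyMeasurable h μ := hcont.aestronglyMeasurable.restrict
  have hint : Integrable h μ := hcont.integrableOn_Ioc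
  have h1norm : eLpNorm h 1 μ = ENNReal.ofReal (∫ t in (0:ℝ)..(2*π), |h t|) := by
    rw [eLpNorm_one_eq_lintegral_enorm, ← ofReal_integral_norm_eq_lintegral_enorm hint]
    congr 1
    rw [intervalIntegral.integral_of_le (by positivity)]
    simp [Real.norm_eq_abs, hμdef]
  have hcompare : eLpNorm h 1 μ ≤ eLpNorm h s μ * ENNReal.ofReal (2*π) := by
    have hmuuniv : μ Set.univ = ENNReal.ofReal (2*π) := by
      rw [hμdef, Measure.restrict_apply_univ, Real.volume_Ioc]
      norm_num
    calc eLpNorm h 1 μ ≤ eLpNorm h s μ * μ Set.univ ^ (1/(1:ℝ≥0∞).toReal - 1/s.toReal) :=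
        eLpNorm_le_eLpNorm_mul_rpow_measure_univ hs1 hmeas
      _ ≤ eLpNorm h s μ * ENNReal.ofReal (2*π) := by
          rw [hmuuniv]
          refine mul_le_mul_right ?_ _
          nth_rewrite 2 [← ENNReal.rpow_one (ENNReal.ofReal (2*π))]
          apply ENNReal.rpow_le_rpow_of_exponent_le
          · rw [ENNReal.one_le_ofReal]; nlinarith [Real.pi_gt_three]
          · have h0 : 0 ≤ 1/s.toReal := by positivity
            simp only [ENNReal.toReal_one]
            linarith
  have hkey : ENNReal.ofReal ((1/2) * (n:ℝ)^(-r)) * ENNReal.ofReal (2*π)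
      ≤ eLpNorm h s μ * ENNReal.ofReal (2*π) := by
    calc ENNReal.ofReal ((1/2)*(n:ℝ)^(-r)) * ENNReal.ofReal (2*π)
        = ENNReal.ofReal ((1/2)*(n:ℝ)^(-r) * (2*π)) := (ENNReal.ofReal_mul (by positivity)).symm
      _ ≤ ENNReal.ofReal (∫ t in (0:ℝ)..(2*π), |h t|) :=
          ENNReal.ofReal_le_ofReal (by nlinarith)
      _ = eLpNorm h 1 μ := h1norm.symm
      _ ≤ _ := hcompare
  have h2π : ENNReal.ofReal (2*π) ≠ 0 := by
    simp only [ne_eq, ENNReal.ofReal_eq_zero, not_le]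
    positivity
  exact (ENNReal.mul_le_mul_iff_left h2π ENNReal.ofReal_ne_top).mp hkey
end
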